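/- Let 𝕋 = μℤ with μ > 0 and consider the positive system x(t+μ) = (I+μA)x(t) + μBu(t) started at x(t₀) = 0. If the matrix [B, (I+μA)B, …, (I+μA)^{k−1}B] contains an n×n monomial submatrix (formed from n of its columns), then every vector in ℝⁿ₊ can be reached at time t₀ + kμ using nonnegative controls. -/

import Mathlib

open scoped Matrix Classical
open MeasureTheory

attribute [local instance] Matrix.linftyOpNormedRing Matrix.linftyOpNormedAlgebra

/-- A nonnegative square matrix is monomial: each row and each column contains
exactly one strictly positive entry, all other entries being zero. -/
def IsMonomial {n : ℕ} (A : Matrix (Fin n) (Fin n) ℝ) : Prop :=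
  (∀ i j, 0 ≤ A i j) ∧ (∀ i, ∃! j, 0 < A i j) ∧ (∀ j, ∃! i, 0 < A i j)

theorem monomial_submatrix_implies_positive_reachability (n m k : ℕ) (μ : ℝ) (hμ : 0 < μ)
    (A : Matrix (Fin n) (Fin n) ℝ) (B : Matrix (Fin n) (Fin m) ℝ)
    (hpos : ∀ i j, 0 ≤ (1 + μ • A) i j) (hB : ∀ i j, 0 ≤ B i j)
    (hmono : ∃ (f : Fin n → Fin k × Fin m) (c : Fin n → ℝ), (∀ l, 0 < c l) ∧
      ∀ l, (((1 + μ • A) ^ ((f l).1 : ℕ)).mulVec fun p => B p (f l).2) =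
        c l • (Pi.single l 1 : Fin n → ℝ)) :
    ∀ xbar : Fin n → ℝ, (∀ i, 0 ≤ xbar i) →
      ∃ u : ℕ → Fin m → ℝ, (∀ j i, 0 ≤ u j i) ∧
        xbar = ∑ i ∈ Finset.range k,
          μ • ((1 + μ • A) ^ i).mulVec (B.mulVec (u (k - 1 - i))) := by
  obtain ⟨f, c, hc, hf⟩ := hmono
  intro xbar hx
  refine ⟨fun t j => ∑ l : Fin n,
      if k - 1 - ((f l).1 : ℕ) = t ∧ (f l).2 = j then xbar l / (μ * c l) else 0, ?_, ?_⟩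
  · intro t j
    refine Finset.sum_nonneg fun l _ => ?_
    split
    · exact div_nonneg (hx l) (le_of_lt (mul_pos hμ (hc l)))
    · exact le_rfl
  · funext p
    have hstep : ∀ i ∈ Finset.range k,
        (μ • ((1 + μ • A) ^ i).mulVec (B.mulVec fun j => ∑ l : Fin n,
          if k - 1 - ((f l).1 : ℕ) = k - 1 - i ∧ (f l).2 = j then xbar l / (μ * c l) else 0)) p
        = ∑ l : Fin n, if ((f l).1 : ℕ) = i then xbar l * (Pi.single l 1 : Fin n → ℝ) p else 0 := by
      intro i hi
      rw [Finset.mem_range] at hi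
      have hcond : ∀ l : Fin n, ∀ j, ((k - 1 - ((f l).1 : ℕ) = k - 1 - i ∧ (f l).2 = j) ↔
          (((f l).1 : ℕ) = i ∧ (f l).2 = j)) := by
        intro l j
        have := (f l).1.isLt
        constructor
        · rintro ⟨h1, h2⟩; exact ⟨by omega, h2⟩
        · rintro ⟨h1, h2⟩; exact ⟨by omega, h2⟩
      simp only [Pi.smul_apply, Matrix.mulVec, dotProduct, smul_eq_mul]
      have hB' : ∀ q : Fin n, (∑ j : Fin m, B q j * ∑ l : Fin n,
          if k - 1 - ((f l).1 : ℕ) = k - 1 - i ∧ (f l).2 = j then xbar l / (μ * c l) else 0)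
          = ∑ l : Fin n, if ((f l).1 : ℕ) = i then B q (f l).2 * (xbar l / (μ * c l)) else 0 := by
        intro q
        simp_rw [Finset.mul_sum]
        rw [Finset.sum_comm]
        refine Finset.sum_congr rfl fun l _ => ?_
        simp_rw [hcond l, mul_ite, mul_zero, ite_and]
        by_cases hli : ((f l).1 : ℕ) = i
        · simp [hli, Finset.sum_ite_eq]
        · simp [hli]
      simp_rw [hB', Finset.mul_sum, mul_ite, mul_zero]
      rw [Finset.sum_comm]
      refine Finset.sum_congr rfl fun l _ => ?_
      by_cases hli : ((f l).1 : ℕ) = i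
      · simp only [hli, if_true]
        have hfl := hf l
        have := congrFun hfl p
        simp only [Matrix.mulVec, dotProduct, Pi.smul_apply, smul_eq_mul] at this
        rw [hli] at this
        have hsum : (∑ q : Fin n, ((1 + μ • A) ^ i) p q * B q (f l).2) = c l * (Pi.single l 1 : Fin n → ℝ) p := this
        have hterm : ∀ x : Fin n, μ * (((1 + μ • A) ^ i) p x * (B x (f l).2 * (xbar l / (μ * c l))))
            = (((1 + μ • A) ^ i) p x * B x (f l).2) * (μ * (xbar l / (μ * c l))) := fun x => by ring
        simp_rw [hterm]
        rw [← Finset.sum_mul, hsum]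
        have hcl := (hc l).ne'
        field_simp
      · simp [hli]
    rw [Finset.sum_apply]
    beta_reduce
    rw [Finset.sum_congr rfl hstep, Finset.sum_comm]
    have : ∀ l : Fin n, (∑ i ∈ Finset.range k,
        if ((f l).1 : ℕ) = i then xbar l * (Pi.single l 1 : Fin n → ℝ) p else 0)
        = xbar l * (Pi.single l 1 : Fin n → ℝ) p := by
      intro l
      rw [Finset.sum_ite_eq (Finset.range k) ((f l).1 : ℕ)
        (fun _ => xbar l * (Pi.single l 1 : Fin n → ℝ) p)]
      simp [(f l).1.isLt]
    simp_rw [this, Pi.single_apply, mul_ite, mul_one, mul_zero]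
    rw [Finset.sum_ite_eq Finset.univ p (fun l => xbar l)]
    simp
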